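/- Let A be an associative algebra over k and N a Novikov algebra over k. On A ⊗ N, define (a ⊗ u) ≺ (b ⊗ v) = ab ⊗ uv and (a ⊗ u) ≻ (b ⊗ v) = ab ⊗ vu. Then A ⊗ N satisfies the identity (x ≺ y) ≺ z - x ≺ (y ≻ z) + (x ≺ y) ≻ z - x ≻ (y ≻ z) = 0. -/
import Mathlib


open scoped TensorProduct

/-- On `A ⊗ N` (`A` associative, `N` Novikov) with
`(a⊗u) ≺ (b⊗v) = ab ⊗ uv` and `(a⊗u) ≻ (b⊗v) = ab ⊗ vu`, the identity
`(x ≺ y) ≺ z - x ≺ (y ≻ z) + (x ≺ y) ≻ z - x ≻ (y ≻ z) = 0` holds. -/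
theorem tensor_identity_two (k A N : Type*) [Field k]
    [NonUnitalRing A] [Module k A] [SMulCommClass k A A] [IsScalarTower k A A]
    [NonUnitalNonAssocRing N] [Module k N] [SMulCommClass k N N]
    [IsScalarTower k N N]
    (hN1 : ∀ u v w : N, (u * v) * w - u * (v * w) = (v * u) * w - v * (u * w))
    (hN2 : ∀ u v w : N, (u * v) * w = (u * w) * v)
    (prec succ : A ⊗[k] N →ₗ[k] A ⊗[k] N →ₗ[k] A ⊗[k] N)
    (hprec : ∀ (a b : A) (u v : N), prec (a ⊗ₜ u) (b ⊗ₜ v) = (a * b) ⊗ₜ (u * v))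
    (hsucc : ∀ (a b : A) (u v : N), succ (a ⊗ₜ u) (b ⊗ₜ v) = (a * b) ⊗ₜ (v * u)) :
    ∀ x y z : A ⊗[k] N,
      prec (prec x y) z - prec x (succ y z) + succ (prec x y) z
        - succ x (succ y z) = 0 := by
  intro x y z
  induction x using TensorProduct.induction_on with
  | zero => simp
  | add x1 x2 h1 h2 =>
    simp only [map_add, LinearMap.add_apply]
    have := congrArg₂ (· + ·) h1 h2
    simp only [add_zero] at this
    rw [← this]; abel
  | tmul a u =>
    induction y using TensorProduct.induction_on with
    | zero => simp
    | add y1 y2 h1 h2 =>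
      simp only [map_add, LinearMap.add_apply]
      have := congrArg₂ (· + ·) h1 h2
      simp only [add_zero] at this
      rw [← this]; abel
    | tmul b v =>
      induction z using TensorProduct.induction_on with
      | zero => simp
      | add z1 z2 h1 h2 =>
        simp only [map_add, LinearMap.add_apply]
        have := congrArg₂ (· + ·) h1 h2
        simp only [add_zero] at this
        rw [← this]; abel
      | tmul c w =>
        have key : (u * v) * w - u * (w * v) + w * (u * v) - (w * v) * u = 0 := by
          rw [hN2 u v w, ← hN2 w u v]
          have h := hN1 u w v
          rw [sub_eq_sub_iff_sub_eq_sub] at h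
          rw [show (u*w)*v - u*(w*v) + w*(u*v) - (w*u)*v
              = ((u*w)*v - (w*u)*v) - (u*(w*v) - w*(u*v)) from by abel, h, sub_self]
        simp only [hprec, hsucc, mul_assoc]
        rw [← TensorProduct.tmul_sub, ← TensorProduct.tmul_add,
          ← TensorProduct.tmul_sub, key, TensorProduct.tmul_zero]
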